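/- Let (a_n) be an arithmetic sequence and x ∈ 𝕋 with canonical representation x = Σ c_n/a_n. If the natural density of supp(x) = {n : c_n ≠ 0} is zero, then x is a topological s-torsion element, i.e., a_n x → 0 statistically in 𝕋. -/

import Mathlib

open Filter Topology Set

/-- Upper natural density of a set of naturals. -/
noncomputable def upperDensity (A : Set ℕ) : ℝ :=
  Filter.limsup (fun n => (Nat.card ↥(A ∩ Set.Iio n) : ℝ) / n) Filter.atTop

/-- `A` has natural density `δ`. -/
def HasDensity (A : Set ℕ) (δ : ℝ) : Prop :=
  Filter.Tendsto (fun n => (Nat.card ↥(A ∩ Set.Iio n) : ℝ) / n) Filter.atTop (nhds δ)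

/-- Statistical convergence of a real sequence. -/
def StatTendsto (x : ℕ → ℝ) (ξ : ℝ) : Prop :=
  ∀ ε : ℝ, 0 < ε → HasDensity {n | ε ≤ |x n - ξ|} 0

/-- An arithmetic sequence: `a 0 = 1 < a 1 < a 2 < ⋯` and `a n ∣ a (n+1)`. -/
def IsArithmeticSeq (a : ℕ → ℕ) : Prop :=
  a 0 = 1 ∧ StrictMono a ∧ ∀ n, a n ∣ a (n + 1)

/-- The ratio `q n = a n / a (n-1)` as a real number. -/
noncomputable def qr (a : ℕ → ℕ) (n : ℕ) : ℝ := (a n : ℝ) / (a (n - 1) : ℝ)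

/-- `(c n)` is a canonical representation sequence w.r.t. `(a n)`:
`0 ≤ c n < q n` and `c n < q n - 1` for infinitely many `n`. -/
def IsCanonicalRep (a : ℕ → ℕ) (c : ℕ → ℕ) : Prop :=
  c 0 = 0 ∧ (∀ n, 1 ≤ n → c n < a n / a (n - 1)) ∧
    (∀ N, ∃ n, N ≤ n ∧ 1 ≤ n ∧ c n + 1 < a n / a (n - 1))

/-- Support of (the canonical representation of) `x`. -/
def suppRep (c : ℕ → ℕ) : Set ℕ := {n | 1 ≤ n ∧ c n ≠ 0}

/-- `supp_q(x) = {n : c n = q n - 1}`. -/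
def suppqRep (a c : ℕ → ℕ) : Set ℕ := {n | 1 ≤ n ∧ c n + 1 = a n / a (n - 1)}

/-- A set `S ⊆ ℕ` is `q`-bounded if `(q n)` is bounded on `S`. -/
def QBounded (a : ℕ → ℕ) (S : Set ℕ) : Prop := ∃ M, ∀ n ∈ S, a n / a (n - 1) ≤ M

/-- A set `S ⊆ ℕ` is `q`-divergent if `q n → ∞` along `n ∈ S`. -/
def QDivergent (a : ℕ → ℕ) (S : Set ℕ) : Prop :=
  Filter.Tendsto (fun n => a n / a (n - 1)) (Filter.atTop ⊓ Filter.principal S) Filter.atTop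

/-- Statistical convergence in a topological space, via neighborhoods. -/
def StatNhdTendsto {α : Type*} [TopologicalSpace α] (y : ℕ → α) (ℓ : α) : Prop :=
  ∀ U ∈ nhds ℓ, HasDensity {n | y n ∉ U} 0

lemma aux_div_le_div (p q : ℝ) (h : p ≤ q) (n : ℕ) : p / (n : ℝ) ≤ q / n := by
  rw [div_eq_mul_inv, div_eq_mul_inv]
  exact mul_le_mul_of_nonneg_right h (by positivity)

lemma aux_card_eq (A : Set ℕ) (n : ℕ) :
    (Nat.card ↥(A ∩ Set.Iio n) : ℝ) = ((A ∩ Set.Iio n).ncard : ℝ) := by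
  rw [Nat.card_coe_set_eq]

lemma card_div_nonneg (A : Set ℕ) (n : ℕ) :
    0 ≤ (Nat.card ↥(A ∩ Set.Iio n) : ℝ) / n :=
  div_nonneg (Nat.cast_nonneg _) (Nat.cast_nonneg _)

lemma hasDensity_zero_mono {A B : Set ℕ} (h : HasDensity B 0) (hAB : A ⊆ B) :
    HasDensity A 0 := by
  apply squeeze_zero (card_div_nonneg A) _ h
  intro n
  apply aux_div_le_div
  rw [aux_card_eq, aux_card_eq]
  exact_mod_cast Set.ncard_le_ncard (Set.inter_subset_inter_left _ hAB)
    ((Set.finite_Iio n).inter_of_right B)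

lemma hasDensity_zero_empty : HasDensity (∅ : Set ℕ) 0 := by
  have : (fun n : ℕ => (Nat.card ↥((∅ : Set ℕ) ∩ Set.Iio n) : ℝ) / n) = fun _ => 0 := by
    funext n; simp
  unfold HasDensity
  rw [this]
  exact tendsto_const_nhds

lemma hasDensity_zero_union {A B : Set ℕ} (hA : HasDensity A 0) (hB : HasDensity B 0) :
    HasDensity (A ∪ B) 0 := by
  have hsum : Filter.Tendsto
      (fun n : ℕ => (Nat.card ↥(A ∩ Set.Iio n) : ℝ) / n + (Nat.card ↥(B ∩ Set.Iio n) : ℝ) / n)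
      Filter.atTop (nhds 0) := by
    simpa using hA.add hB
  apply squeeze_zero (card_div_nonneg _) _ hsum
  intro n
  rw [← add_div]
  apply aux_div_le_div
  rw [aux_card_eq, aux_card_eq, aux_card_eq, ← Nat.cast_add]
  have heq : (A ∪ B) ∩ Set.Iio n = (A ∩ Set.Iio n) ∪ (B ∩ Set.Iio n) := by
    ext k; simp only [Set.mem_inter_iff, Set.mem_union]; tauto
  rw [heq]
  exact_mod_cast Set.ncard_union_le _ _

lemma hasDensity_zero_biUnion {ι : Type*} (s : Finset ι) (A : ι → Set ℕ)
    (h : ∀ i ∈ s, HasDensity (A i) 0) : HasDensity (⋃ i ∈ s, A i) 0 := by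
  classical
  induction s using Finset.induction_on with
  | empty => simpa using hasDensity_zero_empty
  | insert b t hnotmem ih =>
    rw [Finset.set_biUnion_insert]
    exact hasDensity_zero_union (h b (Finset.mem_insert_self b t))
      (ih fun i hi => h i (Finset.mem_insert_of_mem hi))

lemma hasDensity_zero_shift {S : Set ℕ} (h : HasDensity S 0) (j : ℕ) :
    HasDensity {n | n + j ∈ S} 0 := by
  have key : ∀ n : ℕ, ({n | n + j ∈ S} ∩ Set.Iio n).ncard ≤ (S ∩ Set.Iio n).ncard + j := by
    intro n
    have h1 : ({n | n + j ∈ S} ∩ Set.Iio n).ncard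
        = ((fun k => k + j) '' ({n | n + j ∈ S} ∩ Set.Iio n)).ncard :=
      (Set.ncard_image_of_injective _ (add_left_injective j)).symm
    have h2 : ((fun k => k + j) '' ({n | n + j ∈ S} ∩ Set.Iio n)).ncard
        ≤ (S ∩ Set.Iio (n + j)).ncard := by
      apply Set.ncard_le_ncard _ ((Set.finite_Iio (n + j)).inter_of_right S)
      rintro _ ⟨k, ⟨hk1, hk2⟩, rfl⟩
      exact ⟨hk1, by simp only [Set.mem_Iio] at hk2 ⊢; omega⟩
    have h3 : (S ∩ Set.Iio (n + j)).ncard ≤ (S ∩ Set.Iio n).ncard + j := by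
      have hsub : S ∩ Set.Iio (n + j) ⊆ (S ∩ Set.Iio n) ∪ Set.Ico n (n + j) := by
        rintro k ⟨hk, hlt⟩
        simp only [Set.mem_Iio] at hlt
        by_cases hkn : k < n
        · exact Or.inl ⟨hk, hkn⟩
        · exact Or.inr ⟨by omega, hlt⟩
      have hIco : (Set.Ico n (n + j)).ncard = j := by
        rw [← Finset.coe_Ico, Set.ncard_coe_finset, Nat.card_Ico]
        omega
      calc (S ∩ Set.Iio (n + j)).ncard
          ≤ ((S ∩ Set.Iio n) ∪ Set.Ico n (n + j)).ncard :=
            Set.ncard_le_ncard hsub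
              (((Set.finite_Iio n).inter_of_right S).union (Set.finite_Ico n (n + j)))
        _ ≤ (S ∩ Set.Iio n).ncard + (Set.Ico n (n + j)).ncard := Set.ncard_union_le _ _
        _ = (S ∩ Set.Iio n).ncard + j := by rw [hIco]
    omega
  have hsum : Filter.Tendsto
      (fun n : ℕ => (Nat.card ↥(S ∩ Set.Iio n) : ℝ) / n + (j : ℝ) / n)
      Filter.atTop (nhds 0) := by
    simpa using h.add (tendsto_const_div_atTop_nhds_zero_nat (j : ℝ))
  apply squeeze_zero (card_div_nonneg _) _ hsum
  intro n
  rw [← add_div]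
  apply aux_div_le_div
  rw [aux_card_eq, aux_card_eq, ← Nat.cast_add]
  exact_mod_cast key n

/-! ### Auxiliary lemmas: arithmetic sequences -/

section Arith

variable {a c : ℕ → ℕ}

lemma aux_pos (ha : IsArithmeticSeq a) (n : ℕ) : 0 < a n := by
  have h0 : a 0 ≤ a n := ha.2.1.monotone (Nat.zero_le n)
  have h1 := ha.1
  omega

lemma aux_dvd (ha : IsArithmeticSeq a) {k n : ℕ} (h : k ≤ n) : a k ∣ a n := by
  induction n with
  | zero => simpa [Nat.le_zero.mp h]
  | succ m ih =>
    rcases Nat.lt_or_ge k (m + 1) with hk | hk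
    · exact (ih (by omega)).trans (ha.2.2 m)
    · have : k = m + 1 := by omega
      simp [this]

lemma aux_two (ha : IsArithmeticSeq a) (n : ℕ) : 2 * a n ≤ a (n + 1) := by
  obtain ⟨d, hd⟩ := ha.2.2 n
  have h1 : a n < a (n + 1) := ha.2.1 (by omega)
  have h2 : 0 < a n := aux_pos ha n
  have hd2 : 2 ≤ d := by nlinarith [hd]
  nlinarith [hd]

lemma aux_pow (ha : IsArithmeticSeq a) (n m : ℕ) : 2 ^ m * a n ≤ a (n + m) := by
  induction m with
  | zero => simp
  | succ k ih =>
    have h1 := aux_two ha (n + k)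
    have h2 : 2 ^ (k + 1) * a n = 2 * (2 ^ k * a n) := by ring
    calc 2 ^ (k + 1) * a n = 2 * (2 ^ k * a n) := h2
      _ ≤ 2 * a (n + k) := by omega
      _ ≤ a (n + k + 1) := h1
      _ = a (n + (k + 1)) := by ring_nf

lemma aux_f_le (ha : IsArithmeticSeq a) (hc : IsCanonicalRep a c) {n : ℕ} (hn : 1 ≤ n) :
    (c n : ℝ) / (a n : ℝ) ≤ ((a (n - 1) : ℝ))⁻¹ - ((a n : ℝ))⁻¹ := by
  set d := a n / a (n - 1) with hd
  have hdvd : a (n - 1) ∣ a n := by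
    have h := ha.2.2 (n - 1)
    rwa [Nat.sub_add_cancel hn] at h
  have hmul : d * a (n - 1) = a n := Nat.div_mul_cancel hdvd
  have hcn : c n + 1 ≤ d := hc.2.1 n hn
  have hp1 : (0 : ℝ) < a (n - 1) := by exact_mod_cast aux_pos ha (n - 1)
  have hp2 : (0 : ℝ) < a n := by exact_mod_cast aux_pos ha n
  have hmulR : (d : ℝ) * a (n - 1) = a n := by exact_mod_cast hmul
  have hcnR : (c n : ℝ) + 1 ≤ (d : ℝ) := by exact_mod_cast hcn
  rw [div_le_iff₀ hp2]
  have hkey : (((a (n - 1) : ℝ))⁻¹ - ((a n : ℝ))⁻¹) * a n = (d : ℝ) - 1 := by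
    field_simp
    nlinarith [hmulR]
  rw [hkey]
  linarith

lemma aux_f_nonneg (n : ℕ) : 0 ≤ (c n : ℝ) / (a n : ℝ) :=
  div_nonneg (Nat.cast_nonneg _) (Nat.cast_nonneg _)

lemma aux_summable (ha : IsArithmeticSeq a) (hc : IsCanonicalRep a c) :
    Summable (fun k => (c k : ℝ) / (a k : ℝ)) := by
  have hle : ∀ k, (c k : ℝ) / (a k : ℝ) ≤ (2 : ℝ) * ((2 : ℝ)⁻¹) ^ k := by
    intro k
    rcases Nat.eq_zero_or_pos k with rfl | hk
    · simp [hc.1]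
    · have h1 : (c k : ℝ) / a k ≤ ((a (k - 1) : ℝ))⁻¹ - ((a k : ℝ))⁻¹ := aux_f_le ha hc hk
      have h2 : (0 : ℝ) ≤ ((a k : ℝ))⁻¹ := by positivity
      have h3 : (2 : ℕ) ^ (k - 1) ≤ a (k - 1) := by
        have h := aux_pow ha 0 (k - 1)
        simpa [ha.1] using h
      have h4 : ((a (k - 1) : ℝ))⁻¹ ≤ ((2 : ℝ) ^ (k - 1))⁻¹ := by
        apply inv_anti₀ (by positivity)
        exact_mod_cast h3
      have h5 : ((2 : ℝ) ^ (k - 1))⁻¹ = 2 * ((2 : ℝ)⁻¹) ^ k := by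
        obtain ⟨q, rfl⟩ : ∃ q, k = q + 1 := ⟨k - 1, by omega⟩
        simp only [Nat.add_sub_cancel]
        rw [← inv_pow, pow_succ]
        ring
      linarith
  exact Summable.of_nonneg_of_le (fun k => aux_f_nonneg k) hle
    ((summable_geometric_of_lt_one (by norm_num) (by norm_num)).mul_left 2)

lemma aux_tendsto_inv (ha : IsArithmeticSeq a) (N : ℕ) :
    Filter.Tendsto (fun k => ((a (N + k) : ℝ))⁻¹) Filter.atTop (nhds 0) := by
  apply Filter.Tendsto.comp tendsto_inv_atTop_zero
  apply Filter.Tendsto.comp tendsto_natCast_atTop_atTop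
  have hmono : StrictMono (fun k => a (N + k)) := fun i j hij => ha.2.1 (by omega)
  exact hmono.tendsto_atTop

lemma aux_tail_le (ha : IsArithmeticSeq a) (hc : IsCanonicalRep a c) {N : ℕ} (hN : 1 ≤ N) :
    ∑' k, (c (k + N) : ℝ) / (a (k + N) : ℝ) ≤ ((a (N - 1) : ℝ))⁻¹ := by
  set s : ℕ → ℝ := fun k => ((a (N - 1 + k) : ℝ))⁻¹ with hs
  have hterm : ∀ k, (c (k + N) : ℝ) / (a (k + N) : ℝ) ≤ s k - s (k + 1) := by
    intro k
    have h1 := aux_f_le ha hc (n := k + N) (by omega)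
    have e1 : k + N - 1 = N - 1 + k := by omega
    have e2 : k + N = N - 1 + (k + 1) := by omega
    simp only [hs]
    rw [← e1, ← e2]
    exact h1
  have hmono : ∀ k, 0 ≤ s k - s (k + 1) := by
    intro k
    have h1 : a (N - 1 + k) ≤ a (N - 1 + (k + 1)) := ha.2.1.monotone (by omega)
    have hp : (0 : ℝ) < a (N - 1 + k) := by exact_mod_cast aux_pos ha _
    simp only [hs, sub_nonneg]
    apply inv_anti₀ hp
    exact_mod_cast h1
  have hsum : HasSum (fun k => s k - s (k + 1)) (s 0) := by
    rw [hasSum_iff_tendsto_nat_of_nonneg hmono]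
    have hps : ∀ n, ∑ i ∈ Finset.range n, (s i - s (i + 1)) = s 0 - s n :=
      fun n => Finset.sum_range_sub' s n
    simp only [hps]
    have h0 : Filter.Tendsto s Filter.atTop (nhds 0) := aux_tendsto_inv ha (N - 1)
    simpa using tendsto_const_nhds.sub h0
  have hsummable : Summable (fun k => (c (k + N) : ℝ) / (a (k + N) : ℝ)) :=
    (summable_nat_add_iff N).2 (aux_summable ha hc)
  calc ∑' k, (c (k + N) : ℝ) / (a (k + N) : ℝ)
      ≤ ∑' k, (s k - s (k + 1)) := hsummable.tsum_le_tsum hterm hsum.summable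
    _ = s 0 := hsum.tsum_eq
    _ = ((a (N - 1) : ℝ))⁻¹ := by simp [hs]

end Arith

/-- If `d(supp(x)) = 0`, then `x` is a topological `s`-torsion element:
`a_n x → 0` statistically in `𝕋`. -/
theorem sTorsion_of_density_zero_supp (a c : ℕ → ℕ) (ha : IsArithmeticSeq a)
    (hc : IsCanonicalRep a c) (x : AddCircle (1 : ℝ))
    (hx : x = ((∑' n, (c n : ℝ) / (a n : ℝ) : ℝ) : AddCircle (1 : ℝ)))
    (hd : HasDensity (suppRep c) 0) :
    StatNhdTendsto (fun n => a n • x) (0 : AddCircle (1 : ℝ)) := by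
  intro U hU
  have hsummable : Summable (fun k => (c k : ℝ) / (a k : ℝ)) := aux_summable ha hc
  set f : ℕ → ℝ := fun k => (c k : ℝ) / (a k : ℝ) with hf
  set S : ℝ := ∑' n, f n with hS
  have hxS : x = ((S : ℝ) : AddCircle (1 : ℝ)) := hx
  -- neighborhood setup
  have hcont : Continuous (fun r : ℝ => (r : AddCircle (1 : ℝ))) := continuous_quotient_mk'
  have hV : (fun r : ℝ => (r : AddCircle (1 : ℝ))) ⁻¹' U ∈ nhds (0 : ℝ) := by
    apply hcont.continuousAt.preimage_mem_nhds
    simpa using hU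
  obtain ⟨ε, hε, hball⟩ := Metric.mem_nhds_iff.1 hV
  obtain ⟨m, hm⟩ : ∃ m : ℕ, ((2 : ℝ)⁻¹) ^ m < ε :=
    exists_pow_lt_of_lt_one hε (by norm_num)
  -- pointwise statement
  have hpoint : ∀ n : ℕ, (∀ j, j < m → c (n + 1 + j) = 0) → (a n • x ∈ U) := by
    intro n hzero
    set T : ℝ := (a n : ℝ) * ∑' k, f (k + (n + 1 + m)) with hT
    have htail_nonneg : 0 ≤ ∑' k, f (k + (n + 1 + m)) :=
      tsum_nonneg (fun k => aux_f_nonneg (a := a) (c := c) _)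
    -- Step 1: a n • x = T in the circle
    have h1 : (a n) • ((S : ℝ) : AddCircle (1 : ℝ)) = (((a n : ℝ) * S : ℝ) : AddCircle (1 : ℝ)) := by
      rw [← nsmul_eq_mul]
      exact ((QuotientAddGroup.mk' (AddSubgroup.zmultiples (1 : ℝ))).map_nsmul (a n) S).symm
    have hsplit1 : ∑ i ∈ Finset.range (n + 1), f i + ∑' i, f (i + (n + 1)) = S :=
      Summable.sum_add_tsum_nat_add (n + 1) hsummable
    have hsummable2 : Summable (fun i => f (i + (n + 1))) :=
      (summable_nat_add_iff (n + 1)).2 hsummable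
    have hsplit2 : ∑ i ∈ Finset.range m, f (i + (n + 1)) + ∑' i, f (i + m + (n + 1))
        = ∑' i, f (i + (n + 1)) := Summable.sum_add_tsum_nat_add m hsummable2
    have hzero2 : ∑ i ∈ Finset.range m, f (i + (n + 1)) = 0 := by
      apply Finset.sum_eq_zero
      intro i hi
      have hci : c (i + (n + 1)) = 0 := by
        have h := hzero i (Finset.mem_range.1 hi)
        rwa [show n + 1 + i = i + (n + 1) by omega] at h
      simp [hf, hci]
    have hidx : (fun i => f (i + m + (n + 1))) = fun i => f (i + (n + 1 + m)) := by
      funext i; congr 1; omega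
    have hSdecomp : S = ∑ i ∈ Finset.range (n + 1), f i + ∑' i, f (i + (n + 1 + m)) := by
      rw [← hsplit1, ← hsplit2, hzero2, ← hidx]
      ring
    set M : ℕ := ∑ k ∈ Finset.range (n + 1), (a n / a k) * c k with hM
    have hint : (a n : ℝ) * ∑ i ∈ Finset.range (n + 1), f i = (M : ℝ) := by
      rw [hM, Finset.mul_sum, Nat.cast_sum]
      apply Finset.sum_congr rfl
      intro k hk
      have hdvd : a k ∣ a n := aux_dvd ha (Finset.mem_range_succ_iff.1 hk)
      have hak : ((a k : ℝ)) ≠ 0 := by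
        exact_mod_cast (aux_pos ha k).ne'
      rw [Nat.cast_mul, Nat.cast_div hdvd hak]
      simp only [hf]
      field_simp
    have hMT : (a n : ℝ) * S = (M : ℝ) + T := by
      rw [hSdecomp, mul_add, hint, hT]
    have hstep1 : a n • x = ((T : ℝ) : AddCircle (1 : ℝ)) := by
      rw [hxS, h1, hMT]
      have hMzero : (((M : ℝ)) : AddCircle (1 : ℝ)) = 0 := by
        rw [AddCircle.coe_eq_zero_iff]
        exact ⟨(M : ℤ), by simp⟩
      rw [AddCircle.coe_add, hMzero, zero_add]
    -- Step 2: T is small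
    have hTnonneg : 0 ≤ T := mul_nonneg (Nat.cast_nonneg _) htail_nonneg
    have htail : ∑' k, f (k + (n + 1 + m)) ≤ ((a (n + m) : ℝ))⁻¹ := by
      have h := aux_tail_le ha hc (N := n + 1 + m) (by omega)
      simpa [show n + 1 + m - 1 = n + m by omega] using h
    have hpow : (2 : ℝ) ^ m * a n ≤ a (n + m) := by exact_mod_cast aux_pow ha n m
    have hposnm : (0 : ℝ) < a (n + m) := by exact_mod_cast aux_pos ha (n + m)
    have h2m : (0 : ℝ) < 2 ^ m := by positivity
    have hTle : T ≤ ((2 : ℝ)⁻¹) ^ m := by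
      have h2 : T ≤ (a n : ℝ) * ((a (n + m) : ℝ))⁻¹ :=
        mul_le_mul_of_nonneg_left htail (Nat.cast_nonneg _)
      have h3 : (a n : ℝ) * ((a (n + m) : ℝ))⁻¹ ≤ ((2 : ℝ)⁻¹) ^ m := by
        rw [inv_pow]
        rw [mul_inv_le_iff₀ hposnm] 
        rw [inv_mul_eq_div, le_div_iff₀ h2m]
        nlinarith [hpow]
      linarith
    have hTball : T ∈ Metric.ball (0 : ℝ) ε := by
      simp only [Metric.mem_ball, Real.dist_eq, sub_zero, abs_of_nonneg hTnonneg]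
      linarith
    rw [hstep1]
    exact hball hTball
  -- conclude via density
  apply hasDensity_zero_mono
    (hasDensity_zero_biUnion (Finset.range m) (fun j => {n | n + (1 + j) ∈ suppRep c})
      (fun j _ => hasDensity_zero_shift hd (1 + j)))
  intro n hn
  simp only [Set.mem_setOf_eq] at hn
  rw [Set.mem_iUnion₂]
  by_contra hnot
  push_neg at hnot
  apply hn
  apply hpoint
  intro j hj
  by_contra hcne
  exact hnot j (Finset.mem_range.2 hj)
    ⟨by omega, by rwa [show n + (1 + j) = n + 1 + j by omega]⟩
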